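/- Let p = 2^m − δ be a prime and μ a positive integer with μ < m and δ < 2^μ − 1. Let α ∈ Z_{2^μ}, and let P(x), P′(x) be distinct polynomials in F_p[x] with P(0) = P′(0) = 0. Then the number of distinct τ ∈ F_p such that ((P(τ) mod p) mod 2^μ) − ((P′(τ) mod p) mod 2^μ) ≡ α (mod 2^μ) is at most 2^{m−μ+1} · deg(P(x) − P′(x)). -/

import Mathlib

/-- Lemma (based on Lemma 4.1 of BNS2025): with `p = 2^m − δ` prime, `μ < m`, `δ < 2^μ − 1`,
for distinct polynomials `P, P'` over `F_p` with zero constant term and any `α ∈ Z_{2^μ}`,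
the number of `τ ∈ F_p` with `((P(τ) mod p) mod 2^μ) − ((P'(τ) mod p) mod 2^μ) = α` in `Z_{2^μ}`
is at most `2^(m−μ+1) · deg(P − P')`. -/
theorem count_differential_solutions (m δ μ p : ℕ) [NeZero p] (hp : p.Prime)
    (hpm : p = 2 ^ m - δ) (hμ0 : 0 < μ) (hμm : μ < m) (hδ : δ < 2 ^ μ - 1)
    (α : ZMod (2 ^ μ)) (P P' : Polynomial (ZMod p)) (hPP' : P ≠ P')
    (hP0 : P.coeff 0 = 0) (hP'0 : P'.coeff 0 = 0) :
    (Finset.univ.filter fun τ : ZMod p =>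
        (((P.eval τ).val : ZMod (2 ^ μ)) - ((P'.eval τ).val : ZMod (2 ^ μ)) = α)).card
      ≤ 2 ^ (m - μ + 1) * (P - P').natDegree := by
  classical
  haveI : Fact p.Prime := ⟨hp⟩
  set Q := P - P' with hQdef
  have hQ0 : Q ≠ 0 := sub_ne_zero.mpr hPP'
  have hQc0 : Q.coeff 0 = 0 := by
    simp [hQdef, Polynomial.coeff_sub, hP0, hP'0]
  have hQdeg : 1 ≤ Q.natDegree := by
    by_contra h
    push_neg at h
    have h0 : Q.natDegree = 0 := Nat.lt_one_iff.mp h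
    have := Polynomial.eq_C_of_natDegree_eq_zero h0
    rw [hQc0] at this
    simp at this
    exact hQ0 this
  have hple : p ≤ 2 ^ m := hpm ▸ Nat.sub_le _ _
  have hpow : 2 ^ (m - μ) * 2 ^ μ = 2 ^ m := by
    rw [← pow_add, Nat.sub_add_cancel hμm.le]
  -- the target set S
  set S : Finset (ZMod p) := Finset.univ.filter
      (fun v => ((v.val : ZMod (2 ^ μ)) = α ∨ (v.val : ZMod (2 ^ μ)) = α + (p : ZMod (2 ^ μ))))
    with hSdef
  -- each residue class has at most 2^(m-μ) elements
  have hres : ∀ γ : ZMod (2 ^ μ),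
      (Finset.univ.filter fun v : ZMod p => (v.val : ZMod (2 ^ μ)) = γ).card ≤ 2 ^ (m - μ) := by
    intro γ
    have := Finset.card_le_card_of_injOn (fun v : ZMod p => v.val / 2 ^ μ)
      (t := Finset.range (2 ^ (m - μ)))
      (s := Finset.univ.filter fun v : ZMod p => (v.val : ZMod (2 ^ μ)) = γ)
      (fun v _ => by
        simp only [Finset.mem_range]
        have hv : v.val < p := ZMod.val_lt v
        have h2 : v.val < 2 ^ m := lt_of_lt_of_le hv hple
        rw [← hpow, mul_comm] at h2
        exact Finset.mem_coe.mpr (Finset.mem_range.mpr (Nat.div_lt_of_lt_mul h2)))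
      (fun v hv w hw hvw => by
        simp only [Finset.coe_filter, Set.mem_setOf_eq] at hv hw
        have hmod : v.val % 2 ^ μ = w.val % 2 ^ μ := by
          have : (v.val : ZMod (2 ^ μ)) = (w.val : ZMod (2 ^ μ)) := hv.2.trans hw.2.symm
          exact (ZMod.natCast_eq_natCast_iff _ _ _).mp this
        have : v.val = w.val := by
          simp only at hvw
          conv_lhs => rw [← Nat.div_add_mod v.val (2 ^ μ)]
          conv_rhs => rw [← Nat.div_add_mod w.val (2 ^ μ)]
          rw [hvw, hmod]
        exact ZMod.val_injective p this)
    simpa using this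
  have hScard : S.card ≤ 2 ^ (m - μ + 1) := by
    have hsub : S ⊆ (Finset.univ.filter fun v : ZMod p => (v.val : ZMod (2 ^ μ)) = α) ∪
        (Finset.univ.filter fun v : ZMod p => (v.val : ZMod (2 ^ μ)) = α + (p : ZMod (2 ^ μ))) := by
      intro v hv
      simp only [hSdef, Finset.mem_filter, Finset.mem_univ, true_and] at hv
      rcases hv with h | h
      · exact Finset.mem_union_left _ (Finset.mem_filter.mpr ⟨Finset.mem_univ _, h⟩)
      · exact Finset.mem_union_right _ (Finset.mem_filter.mpr ⟨Finset.mem_univ _, h⟩)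
    calc S.card ≤ _ := Finset.card_le_card hsub
      _ ≤ _ + _ := Finset.card_union_le _ _
      _ ≤ 2 ^ (m - μ) + 2 ^ (m - μ) := Nat.add_le_add (hres α) (hres _)
      _ = 2 ^ (m - μ + 1) := by ring
  -- the counted set, image under Q.eval lands in S
  set T := (Finset.univ.filter fun τ : ZMod p =>
        (((P.eval τ).val : ZMod (2 ^ μ)) - ((P'.eval τ).val : ZMod (2 ^ μ)) = α)) with hTdef
  have himg : T.image (fun τ => Q.eval τ) ⊆ S := by
    intro v hv
    simp only [Finset.mem_image] at hv
    obtain ⟨τ, hτ, rfl⟩ := hv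
    simp only [hTdef, Finset.mem_filter, Finset.mem_univ, true_and] at hτ
    simp only [hSdef, Finset.mem_filter, Finset.mem_univ, true_and]
    have heval : Q.eval τ = P.eval τ - P'.eval τ := by simp [hQdef]
    set a := P.eval τ with ha
    set b := P'.eval τ with hb
    rcases le_or_gt b.val a.val with h | h
    · left
      rw [heval, ZMod.val_sub h, ← hτ, Nat.cast_sub h]
    · right
      have hba : (b - a) ≠ 0 := by
        intro h0
        have : b = a := by linear_combination (norm := abel) h0
        rw [this] at h
        exact lt_irrefl _ h
      haveI : NeZero (b - a) := ⟨hba⟩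
      have hval : (b - a).val = b.val - a.val := ZMod.val_sub h.le
      have hQv : (Q.eval τ) = -(b - a) := by rw [heval]; ring
      rw [hQv, ZMod.val_neg_of_ne_zero, hval, ← hτ]
      have h1 : b.val - a.val ≤ p := by
        have := ZMod.val_lt b; omega
      have h2 : a.val ≤ b.val := h.le
      rw [Nat.cast_sub h1, Nat.cast_sub h2]
      ring
  -- fibers have at most natDegree Q elements
  have hfiber : ∀ v ∈ T.image (fun τ => Q.eval τ),
      (T.filter fun τ => Q.eval τ = v).card ≤ Q.natDegree := by
    intro v _
    have hne : Q - Polynomial.C v ≠ 0 := by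
      intro h0
      have : (Q - Polynomial.C v).natDegree = Q.natDegree := Polynomial.natDegree_sub_C
      rw [h0] at this
      simp at this
      omega
    have hsub : (T.filter fun τ => Q.eval τ = v) ⊆ (Q - Polynomial.C v).roots.toFinset := by
      intro τ hτ
      simp only [Finset.mem_filter] at hτ
      rw [Multiset.mem_toFinset, Polynomial.mem_roots hne]
      simp [Polynomial.IsRoot, Polynomial.eval_sub, hτ.2]
    calc (T.filter fun τ => Q.eval τ = v).card ≤ _ := Finset.card_le_card hsub
      _ ≤ Multiset.card (Q - Polynomial.C v).roots := Multiset.toFinset_card_le _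
      _ ≤ (Q - Polynomial.C v).natDegree := Polynomial.card_roots' _
      _ = Q.natDegree := Polynomial.natDegree_sub_C
  calc T.card ≤ Q.natDegree * (T.image (fun τ => Q.eval τ)).card :=
        Finset.card_le_mul_card_image T Q.natDegree hfiber
    _ ≤ Q.natDegree * S.card := Nat.mul_le_mul_left _ (Finset.card_le_card himg)
    _ ≤ Q.natDegree * 2 ^ (m - μ + 1) := Nat.mul_le_mul_left _ hScard
    _ = 2 ^ (m - μ + 1) * Q.natDegree := Nat.mul_comm _ _
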